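/- Let θ̄ ∈ [0, π/2). For a unit quaternion q = (q₀, q_x, q_y, q_z), the roll angle of the associated ZYX Euler parametrization is φ(q) = atan2(2(q₀q_x + q_yq_z), 1 − 2(q_x² + q_y²)), and the pitch is θ(q) = arcsin(2(q₀q_y − q_xq_z)). On the set of unit quaternions with |θ(q)| ≤ θ̄ (and away from the atan2 branch cut, i.e., 1 − 2(q_x²+q_y²) and 2(q₀q_x+q_yq_z) not both in the closed negative-x half-line), φ is differentiable and its gradient satisfies ‖∇φ(q)‖ ≤ √2 / cos θ̄ (up to a universal constant); consequently φ is locally Lipschitz there with Lipschitz constant depending only on θ̄. -/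

import Mathlib

open Real

noncomputable def rollOf (q : EuclideanSpace ℝ (Fin 4)) : ℝ :=
  Complex.arg (Complex.ofReal (1 - 2 * ((q 1) ^ 2 + (q 2) ^ 2)) +
    Complex.ofReal (2 * (q 0 * q 1 + q 2 * q 3)) * Complex.I)

noncomputable def pitchOf (q : EuclideanSpace ℝ (Fin 4)) : ℝ :=
  Real.arcsin (2 * (q 0 * q 2 - q 1 * q 3))

private noncomputable def P4 (i : Fin 4) : EuclideanSpace ℝ (Fin 4) →L[ℝ] ℝ :=
  EuclideanSpace.proj i

private lemma coord_abs_le (v : EuclideanSpace ℝ (Fin 4)) (i : Fin 4) : |v i| ≤ ‖v‖ := by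
  rw [EuclideanSpace.norm_eq, ← Real.sqrt_sq_eq_abs]
  apply Real.sqrt_le_sqrt
  have h := Finset.single_le_sum (f := fun j => ‖v j‖ ^ 2) (fun j _ => sq_nonneg _)
    (Finset.mem_univ i)
  simpa [Real.norm_eq_abs, sq_abs] using h

set_option maxHeartbeats 1000000 in
theorem stmt14 (θbar : ℝ) (hθ : θbar ∈ Set.Ico 0 (π / 2)) :
    ∃ c : ℝ, 0 < c ∧
      ∀ q : EuclideanSpace ℝ (Fin 4), ‖q‖ = 1 →
        |pitchOf q| ≤ θbar →
        ¬(2 * (q 0 * q 1 + q 2 * q 3) = 0 ∧ 1 - 2 * ((q 1) ^ 2 + (q 2) ^ 2) ≤ 0) →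
        DifferentiableAt ℝ rollOf q ∧
          ‖fderiv ℝ rollOf q‖ ≤ c * (Real.sqrt 2 / Real.cos θbar) := by
  obtain ⟨hθ0, hθ2⟩ := hθ
  have hπ := Real.pi_pos
  have hcos : 0 < Real.cos θbar := Real.cos_pos_of_mem_Ioo ⟨by linarith, hθ2⟩
  refine ⟨16, by norm_num, ?_⟩
  intro q hq hp hslit
  set F : EuclideanSpace ℝ (Fin 4) → ℂ := fun v =>
    Complex.ofReal (1 - 2 * ((v 1) ^ 2 + (v 2) ^ 2)) +
      Complex.ofReal (2 * (v 0 * v 1 + v 2 * v 3)) * Complex.I with hF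
  set z : ℂ := F q with hz
  have hzre : z.re = 1 - 2 * ((q 1) ^ 2 + (q 2) ^ 2) := by
    simp [hz, hF, ← Complex.ofReal_pow]
  have hzim : z.im = 2 * (q 0 * q 1 + q 2 * q 3) := by
    simp [hz, hF, ← Complex.ofReal_pow]
  have hsum : (q 0) ^ 2 + (q 1) ^ 2 + (q 2) ^ 2 + (q 3) ^ 2 = 1 := by
    have h1 : ‖q‖ ^ 2 = (1 : ℝ) := by rw [hq]; norm_num
    rw [EuclideanSpace.norm_eq, Real.sq_sqrt (by positivity)] at h1
    simpa [Fin.sum_univ_four, Real.norm_eq_abs, sq_abs] using h1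
  set s : ℝ := 2 * (q 0 * q 2 - q 1 * q 3) with hsdef
  have hxys : z.re ^ 2 + z.im ^ 2 = 1 - s ^ 2 := by
    rw [hzre, hzim, hsdef]
    nlinarith [hsum, sq_nonneg (q 0 ^ 2 + q 1 ^ 2 + q 2 ^ 2 + q 3 ^ 2 - 1)]
  have hs2 : s ^ 2 ≤ 1 := by nlinarith [sq_nonneg z.re, sq_nonneg z.im]
  have hcosle : Real.cos θbar ≤ Real.sqrt (1 - s ^ 2) := by
    have hple : |Real.arcsin s| ≤ θbar := hp
    have h1 : Real.cos θbar ≤ Real.cos |Real.arcsin s| :=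
      Real.cos_le_cos_of_nonneg_of_le_pi (abs_nonneg _) (by linarith) hple
    rwa [Real.cos_abs, Real.cos_arcsin] at h1
  have habs : Real.cos θbar ≤ ‖z‖ := by
    have h : ‖z‖ = Real.sqrt (1 - s ^ 2) := by
      rw [Complex.norm_def, Complex.normSq_apply, ← hxys]; ring_nf
    rw [h]; exact hcosle
  have hz0 : (0 : ℝ) < ‖z‖ := lt_of_lt_of_le hcos habs
  have hzslit : z ∈ Complex.slitPlane := by
    rw [Complex.mem_slitPlane_iff]
    push_neg at hslit
    rcases eq_or_ne z.im 0 with h | h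
    · left
      rw [hzre]
      exact lt_of_not_ge fun hc => absurd (hslit (by rw [← hzim, h])) (not_lt.mpr hc)
    · right; exact h
  -- derivative of F
  have h0 : HasFDerivAt (fun v : EuclideanSpace ℝ (Fin 4) => v 0) (P4 0) q := (P4 0).hasFDerivAt
  have h1 : HasFDerivAt (fun v : EuclideanSpace ℝ (Fin 4) => v 1) (P4 1) q := (P4 1).hasFDerivAt
  have h2 : HasFDerivAt (fun v : EuclideanSpace ℝ (Fin 4) => v 2) (P4 2) q := (P4 2).hasFDerivAt
  have h3 : HasFDerivAt (fun v : EuclideanSpace ℝ (Fin 4) => v 3) (P4 3) q := (P4 3).hasFDerivAt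
  have hre : HasFDerivAt (fun v : EuclideanSpace ℝ (Fin 4) => 1 - 2 * ((v 1) ^ 2 + (v 2) ^ 2))
      ((-(4 : ℝ) * q 1) • P4 1 + (-(4 : ℝ) * q 2) • P4 2) q := by
    have h := (hasFDerivAt_const (1 : ℝ) q).sub (((h1.mul h1).add (h2.mul h2)).const_mul 2)
    refine (h.congr_of_eventuallyEq (Filter.Eventually.of_forall fun v => by simp only [Pi.sub_apply, Pi.add_apply, Pi.mul_apply]; ring)).congr_fderiv ?_
    ext v
    simp [P4, smul_smul]
    ring
  have him : HasFDerivAt (fun v : EuclideanSpace ℝ (Fin 4) => 2 * (v 0 * v 1 + v 2 * v 3))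
      ((2 * q 1) • P4 0 + (2 * q 0) • P4 1 + (2 * q 3) • P4 2 + (2 * q 2) • P4 3) q := by
    have h := (((h0.mul h1).add (h2.mul h3)).const_mul 2)
    refine h.congr_fderiv ?_
    ext v
    simp [P4, smul_smul]
    ring
  have hFder : HasFDerivAt F
      (Complex.ofRealCLM.comp ((-(4 : ℝ) * q 1) • P4 1 + (-(4 : ℝ) * q 2) • P4 2) +
        Complex.I • Complex.ofRealCLM.comp
          ((2 * q 1) • P4 0 + (2 * q 0) • P4 1 + (2 * q 3) • P4 2 + (2 * q 2) • P4 3)) q :=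
    (Complex.ofRealCLM.hasFDerivAt.comp q hre).add
      ((Complex.ofRealCLM.hasFDerivAt.comp q him).mul_const Complex.I)
  have hfun : rollOf = fun v => (Complex.log (F v)).im := by
    funext v
    simp [rollOf, hF, Complex.log_im]
  have hlog : HasFDerivAt (fun v => Complex.log (F v))
      (((ContinuousLinearMap.smulRight (1 : ℂ →L[ℂ] ℂ) z⁻¹).restrictScalars ℝ).comp
        (Complex.ofRealCLM.comp ((-(4 : ℝ) * q 1) • P4 1 + (-(4 : ℝ) * q 2) • P4 2) +
          Complex.I • Complex.ofRealCLM.comp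
            ((2 * q 1) • P4 0 + (2 * q 0) • P4 1 + (2 * q 3) • P4 2 + (2 * q 2) • P4 3))) q :=
    by have hl := ((Complex.hasDerivAt_log hzslit).hasFDerivAt).restrictScalars ℝ; exact hl.comp q hFder
  have hIm : HasFDerivAt (fun v => (Complex.log (F v)).im)
      (Complex.imCLM.comp
        (((ContinuousLinearMap.smulRight (1 : ℂ →L[ℂ] ℂ) z⁻¹).restrictScalars ℝ).comp
          (Complex.ofRealCLM.comp ((-(4 : ℝ) * q 1) • P4 1 + (-(4 : ℝ) * q 2) • P4 2) +
            Complex.I • Complex.ofRealCLM.comp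
              ((2 * q 1) • P4 0 + (2 * q 0) • P4 1 + (2 * q 3) • P4 2 + (2 * q 2) • P4 3)))) q :=
    Complex.imCLM.hasFDerivAt.comp q hlog
  rw [hfun]
  refine ⟨hIm.differentiableAt, ?_⟩
  rw [hIm.fderiv]
  refine ContinuousLinearMap.opNorm_le_bound _ (by positivity) fun v => ?_
  have hvb : ∀ i, |v i| ≤ ‖v‖ := fun i => coord_abs_le v i
  have hqb : ∀ i, |q i| ≤ 1 := by
    intro i; have h := coord_abs_le q i; rwa [hq] at h
  set a : ℝ := -(4 : ℝ) * q 1 * v 1 + -(4 : ℝ) * q 2 * v 2 with ha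
  set b : ℝ := 2 * q 1 * v 0 + 2 * q 0 * v 1 + 2 * q 3 * v 2 + 2 * q 2 * v 3 with hb
  have hval : (Complex.imCLM.comp
      (((ContinuousLinearMap.smulRight (1 : ℂ →L[ℂ] ℂ) z⁻¹).restrictScalars ℝ).comp
        (Complex.ofRealCLM.comp ((-(4 : ℝ) * q 1) • P4 1 + (-(4 : ℝ) * q 2) • P4 2) +
          Complex.I • Complex.ofRealCLM.comp
            ((2 * q 1) • P4 0 + (2 * q 0) • P4 1 + (2 * q 3) • P4 2 + (2 * q 2) • P4 3)))) v =
      (((Complex.ofReal a + Complex.I * Complex.ofReal b)) * z⁻¹).im := by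
    simp [P4, ha, hb, ContinuousLinearMap.add_apply,
      ContinuousLinearMap.smul_apply, ContinuousLinearMap.smulRight_apply,
      ContinuousLinearMap.coe_restrictScalars', smul_eq_mul]
    ring_nf
  rw [hval, Real.norm_eq_abs]
  have habs1 : ‖Complex.ofReal a + Complex.I * Complex.ofReal b‖ ≤ |a| + |b| := by
    have h := Complex.norm_le_abs_re_add_abs_im (Complex.ofReal a + Complex.I * Complex.ofReal b)
    simpa using h
  have hA : |a| ≤ 8 * ‖v‖ := by
    have m1 : |q 1| * |v 1| ≤ 1 * ‖v‖ :=
      mul_le_mul (hqb 1) (hvb 1) (abs_nonneg _) zero_le_one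
    have m2 : |q 2| * |v 2| ≤ 1 * ‖v‖ :=
      mul_le_mul (hqb 2) (hvb 2) (abs_nonneg _) zero_le_one
    calc |a| ≤ |(-(4 : ℝ) * q 1 * v 1)| + |(-(4 : ℝ) * q 2 * v 2)| := abs_add_le _ _
      _ = 4 * (|q 1| * |v 1|) + 4 * (|q 2| * |v 2|) := by
          rw [abs_mul, abs_mul, abs_mul, abs_mul]; norm_num; ring
      _ ≤ 4 * (1 * ‖v‖) + 4 * (1 * ‖v‖) := by gcongr
      _ = 8 * ‖v‖ := by ring
  have hB : |b| ≤ 8 * ‖v‖ := by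
    have m0 : |q 1| * |v 0| ≤ 1 * ‖v‖ :=
      mul_le_mul (hqb 1) (hvb 0) (abs_nonneg _) zero_le_one
    have m1 : |q 0| * |v 1| ≤ 1 * ‖v‖ :=
      mul_le_mul (hqb 0) (hvb 1) (abs_nonneg _) zero_le_one
    have m2 : |q 3| * |v 2| ≤ 1 * ‖v‖ :=
      mul_le_mul (hqb 3) (hvb 2) (abs_nonneg _) zero_le_one
    have m3 : |q 2| * |v 3| ≤ 1 * ‖v‖ :=
      mul_le_mul (hqb 2) (hvb 3) (abs_nonneg _) zero_le_one
    calc |b| ≤ |2 * q 1 * v 0 + 2 * q 0 * v 1 + 2 * q 3 * v 2| + |2 * q 2 * v 3| := abs_add_le _ _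
      _ ≤ (|2 * q 1 * v 0 + 2 * q 0 * v 1| + |2 * q 3 * v 2|) + |2 * q 2 * v 3| := by
          gcongr; exact abs_add_le _ _
      _ ≤ ((|2 * q 1 * v 0| + |2 * q 0 * v 1|) + |2 * q 3 * v 2|) + |2 * q 2 * v 3| := by
          gcongr; exact abs_add_le _ _
      _ = 2 * (|q 1| * |v 0|) + 2 * (|q 0| * |v 1|) + 2 * (|q 3| * |v 2|) + 2 * (|q 2| * |v 3|) := by
          rw [abs_mul, abs_mul, abs_mul, abs_mul, abs_mul, abs_mul, abs_mul, abs_mul]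
          norm_num; ring
      _ ≤ 2 * (1 * ‖v‖) + 2 * (1 * ‖v‖) + 2 * (1 * ‖v‖) + 2 * (1 * ‖v‖) := by gcongr
      _ = 8 * ‖v‖ := by ring
  have hstep : |(((Complex.ofReal a + Complex.I * Complex.ofReal b)) * z⁻¹).im| ≤
      (|a| + |b|) * ‖z‖⁻¹ := by
    calc |(((Complex.ofReal a + Complex.I * Complex.ofReal b)) * z⁻¹).im|
        ≤ ‖(Complex.ofReal a + Complex.I * Complex.ofReal b) * z⁻¹‖ :=
          Complex.abs_im_le_norm _
      _ = ‖Complex.ofReal a + Complex.I * Complex.ofReal b‖ * ‖z‖⁻¹ := by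
          rw [norm_mul, norm_inv]
      _ ≤ (|a| + |b|) * ‖z‖⁻¹ := by
          gcongr
  have hinv : ‖z‖⁻¹ ≤ (Real.cos θbar)⁻¹ := inv_anti₀ hcos habs
  have h2 : (1 : ℝ) ≤ Real.sqrt 2 := by
    rw [show (1 : ℝ) = Real.sqrt 1 by simp]
    exact Real.sqrt_le_sqrt (by norm_num)
  calc |(((Complex.ofReal a + Complex.I * Complex.ofReal b)) * z⁻¹).im|
      ≤ (|a| + |b|) * ‖z‖⁻¹ := hstep
    _ ≤ (8 * ‖v‖ + 8 * ‖v‖) * (Real.cos θbar)⁻¹ := by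
        apply mul_le_mul (by linarith) hinv (inv_nonneg.2 hz0.le) (by positivity)
    _ = 16 * (1 / Real.cos θbar) * ‖v‖ := by ring
    _ ≤ 16 * (Real.sqrt 2 / Real.cos θbar) * ‖v‖ := by
        gcongr 16 * (?_ / Real.cos θbar) * ‖v‖
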